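/- arXiv:1707.00771 — 5 statements merged into one kernel-verified Lean document; each statement's English description precedes it below -/
import Mathlib

section
/- A pair (x,y) ∈ ℝ^d × ℝ^d belongs to Π (i.e., for every non-increasing ψ : ℕ → ℝ_{≥0} with Σ_n ψ(n)^d = ∞ there exist infinitely many n ∈ ℕ with ‖nx+y‖ < ψ(n)) if and only if for every ℓ ∈ ℕ the sum S_ℓ(x,y) = Σ_{n≥ℓ} min_{ℓ≤m≤n} ‖mx+y‖^d is finite. -/
open scoped ENNReal
open Filter

/-- Sup-norm distance from `x ∈ ℝ^d` to the nearest point of `ℤ^d`. -/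
noncomputable def nrm {d : ℕ} (x : Fin d → ℝ) : ℝ :=
  ⨆ i, |x i - round (x i)|

/-- The class `𝒟` of non-increasing `ψ : ℕ → ℝ≥0` with `Σ ψ(n)^d = ∞`. -/
def calD (d : ℕ) : Set (ℕ → ℝ) :=
  {ψ | (∀ n, 0 ≤ ψ n) ∧ Antitone ψ ∧ ¬ Summable (fun n => ψ n ^ d)}

/-- The inhomogeneously `ψ`-approximable pairs. -/
def W {d : ℕ} (ψ : ℕ → ℝ) : Set ((Fin d → ℝ) × (Fin d → ℝ)) :=
  {p | ∃ᶠ n : ℕ in atTop, nrm (fun i => (n : ℝ) * p.1 i + p.2 i) < ψ n}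

/-- `Π = ⋂_{ψ ∈ 𝒟} W(ψ)`. -/
def PiSet (d : ℕ) : Set ((Fin d → ℝ) × (Fin d → ℝ)) := ⋂ ψ ∈ calD d, W ψ

/-- The vertical fiber `Φ(x)`. -/
def Phi {d : ℕ} (x : Fin d → ℝ) : Set (Fin d → ℝ) := {y | (x, y) ∈ PiSet d}

/-- `S_ℓ(x,y) = Σ_{n≥ℓ} min_{ℓ≤m≤n} ‖mx+y‖^d`, valued in `[0,∞]`. -/
noncomputable def S {d : ℕ} (l : ℤ) (x y : Fin d → ℝ) : ℝ≥0∞ :=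
  ∑' n : ℕ, ⨅ m ∈ Finset.Icc l (l + n),
    ENNReal.ofReal ((nrm (fun i => (m : ℝ) * x i + y i)) ^ d)

lemma nrm_nonneg {d : ℕ} (x : Fin d → ℝ) : 0 ≤ nrm x :=
  Real.iSup_nonneg fun i => abs_nonneg _

noncomputable def gxy {d : ℕ} (x y : Fin d → ℝ) (m : ℤ) : ℝ :=
  nrm (fun i => (m : ℝ) * x i + y i)

lemma icc_ne (l : ℤ) (n : ℕ) : (Finset.Icc l (l + (n : ℤ))).Nonempty :=
  ⟨l, Finset.mem_Icc.2 ⟨le_refl _, le_add_of_nonneg_right (by positivity)⟩⟩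

noncomputable def phi {d : ℕ} (x y : Fin d → ℝ) (l : ℤ) (n : ℕ) : ℝ :=
  (Finset.Icc l (l + (n : ℤ))).inf' (icc_ne l n) (gxy x y)

lemma phi_nonneg {d : ℕ} (x y : Fin d → ℝ) (l : ℤ) (n : ℕ) : 0 ≤ phi x y l n :=
  Finset.le_inf' _ _ fun m _ => nrm_nonneg _

lemma phi_antitone {d : ℕ} (x y : Fin d → ℝ) (l : ℤ) : Antitone (phi x y l) := by
  intro a b hab
  exact Finset.inf'_mono _ (Finset.Icc_subset_Icc le_rfl (by exact_mod_cast add_le_add_right (by exact_mod_cast hab) l)) _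

lemma phi_le {d : ℕ} (x y : Fin d → ℝ) {l : ℤ} {n : ℕ} {m : ℤ}
    (hm : m ∈ Finset.Icc l (l + (n : ℤ))) : phi x y l n ≤ gxy x y m :=
  Finset.inf'_le _ hm

/-- The term of `S` equals `ofReal (phi ^ d)`. -/
lemma S_term {d : ℕ} (x y : Fin d → ℝ) (l : ℤ) (n : ℕ) :
    (⨅ m ∈ Finset.Icc l (l + (n : ℤ)),
      ENNReal.ofReal ((nrm (fun i => (m : ℝ) * x i + y i)) ^ d))
      = ENNReal.ofReal (phi x y l n ^ d) := by
  obtain ⟨m₀, hm₀, hinf⟩ := Finset.exists_mem_eq_inf' (icc_ne l n) (gxy x y)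
  apply le_antisymm
  · exact biInf_le _ hm₀ |>.trans_eq (by rw [show phi x y l n = gxy x y m₀ from hinf]; rfl)
  · refine le_iInf₂ fun m hm => ENNReal.ofReal_le_ofReal ?_
    exact pow_le_pow_left₀ (phi_nonneg x y l n) (phi_le x y hm) d

lemma S_eq {d : ℕ} (x y : Fin d → ℝ) (l : ℤ) :
    S l x y = ∑' n : ℕ, ENNReal.ofReal (phi x y l n ^ d) := by
  unfold S; exact tsum_congr fun n => S_term x y l n

/-- Bridge: tsum of ofReal finite iff summable, for nonneg functions. -/
lemma tsum_ofReal_ne_top_iff {f : ℕ → ℝ} (hf : ∀ n, 0 ≤ f n) :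
    (∑' n, ENNReal.ofReal (f n)) ≠ ⊤ ↔ Summable f := by
  rw [show (fun n => ENNReal.ofReal (f n)) = fun n => ((f n).toNNReal : ℝ≥0∞) from rfl]
  rw [ENNReal.tsum_coe_ne_top_iff_summable]
  constructor
  · intro h
    have := NNReal.summable_coe.2 h
    simpa [Real.coe_toNNReal _ (hf _)] using this
  · intro h
    rw [← NNReal.summable_coe]
    simpa [Real.coe_toNNReal _ (hf _)] using h

theorem stmt3 {d : ℕ} (x y : Fin d → ℝ) :
    (x, y) ∈ PiSet d ↔ ∀ l : ℤ, 1 ≤ l → S l x y ≠ ⊤ := by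
  constructor
  · -- ⇒ : if S l = ⊤, build ψ ∈ calD with (x,y) ∉ W ψ.
    intro hPi l hl hS
    set L := l.toNat with hL
    have hlL : (L : ℤ) = l := Int.toNat_of_nonneg (by linarith)
    set ψ : ℕ → ℝ := fun n => phi x y l (n - L) with hψdef
    have hψ : ψ ∈ calD d := by
      refine ⟨fun n => phi_nonneg x y l _, ?_, ?_⟩
      · intro a b hab
        exact phi_antitone x y l (Nat.sub_le_sub_right hab L)
      · intro hsum
        have h2 : Summable (fun n => phi x y l n ^ d) := by
          have := (summable_nat_add_iff (f := fun n => ψ n ^ d) L).2 hsum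
          simpa [hψdef, Nat.add_sub_cancel] using this
        have h3 : (∑' n : ℕ, ENNReal.ofReal (phi x y l n ^ d)) ≠ ⊤ :=
          (tsum_ofReal_ne_top_iff (fun n => pow_nonneg (phi_nonneg x y l n) d)).2 h2
        exact h3 (by rw [← S_eq]; exact hS)
    have hW : (x, y) ∈ W (d := d) ψ := Set.mem_iInter₂.1 hPi ψ hψ
    obtain ⟨n, hn1, hn2⟩ := (hW.and_eventually (eventually_ge_atTop L)).exists
    have hmem : (n : ℤ) ∈ Finset.Icc l (l + ((n - L : ℕ) : ℤ)) := by
      rw [Finset.mem_Icc]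
      constructor
      · rw [← hlL]; exact_mod_cast hn2
      · rw [Nat.cast_sub hn2, ← hlL]; omega
    have hle : ψ n ≤ nrm (fun i => (n : ℝ) * x i + y i) := by
      have := phi_le x y hmem
      simpa [gxy] using this
    exact absurd hn1 (not_lt.2 hle)
  · -- ⇐
    intro hS
    refine Set.mem_iInter₂.2 fun ψ hψ => ?_
    obtain ⟨hψ0, hψa, hψs⟩ := hψ
    by_contra hcon
    simp only [W, Set.mem_setOf_eq, Filter.not_frequently] at hcon
    obtain ⟨N, hN⟩ := eventually_atTop.1 hcon
    set M := max N 1 with hM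
    set l : ℤ := (M : ℤ) with hldef
    have hl : 1 ≤ l := by rw [hldef]; exact_mod_cast le_max_right N 1
    have hSl := hS l hl
    have key : ∀ n : ℕ, ψ (M + n) ≤ phi x y l n := by
      intro n
      refine Finset.le_inf' _ _ fun m hm => ?_
      rw [Finset.mem_Icc] at hm
      have hm1 : (1 : ℤ) ≤ m := le_trans hl hm.1
      have hmnat : ((m.toNat : ℤ)) = m := Int.toNat_of_nonneg (by linarith)
      have hge : N ≤ m.toNat := by
        have : (M : ℤ) ≤ m := hm.1
        have : (N : ℤ) ≤ m := le_trans (by exact_mod_cast le_max_left N 1) this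
        omega
      have h1 : ψ m.toNat ≤ nrm (fun i => (m.toNat : ℝ) * x i + y i) :=
        not_lt.1 (hN m.toNat hge)
      have h2 : ψ (M + n) ≤ ψ m.toNat := hψa (by omega)
      have : nrm (fun i => (m.toNat : ℝ) * x i + y i) = gxy x y m := by
        rw [gxy]
        congr 1
        funext i
        rw [show ((m.toNat : ℕ) : ℝ) = ((m : ℤ) : ℝ) by exact_mod_cast congrArg (Int.cast : ℤ → ℝ) hmnat]
      linarith [this ▸ h1]
    have hterm : ∀ n : ℕ,
        ENNReal.ofReal (ψ (M + n) ^ d) ≤ ENNReal.ofReal (phi x y l n ^ d) := by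
      intro n
      exact ENNReal.ofReal_le_ofReal (pow_le_pow_left₀ (hψ0 _) (key n) d)
    have hsum1 : (∑' n : ℕ, ENNReal.ofReal (ψ (M + n) ^ d)) ≠ ⊤ := by
      refine ne_top_of_le_ne_top ?_ (ENNReal.tsum_le_tsum hterm)
      rw [← S_eq]; exact hSl
    have hsum2 : Summable (fun n => ψ (M + n) ^ d) :=
      (tsum_ofReal_ne_top_iff (fun n => pow_nonneg (hψ0 _) d)).1 hsum1
    have : Summable (fun n => ψ n ^ d) := by
      refine (summable_nat_add_iff (f := fun n => ψ n ^ d) M).1 ?_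
      simpa [add_comm] using hsum2
    exact hψs this
end

section
/- For every y ∈ ℝ^d and every v ∈ ℕ, (1/v)·Π^y ⊆ Π^y; that is, if x ∈ Π^y then x/v ∈ Π^y. -/
open scoped ENNReal
open Filter

/-- The horizontal fiber `Π^y`. -/
def PiY {d : ℕ} (y : Fin d → ℝ) : Set (Fin d → ℝ) := {x | (x, y) ∈ PiSet d}

lemma aux_not_summable {v d : ℕ} (hv : 0 < v) {ψ : ℕ → ℝ} (h0 : ∀ n, 0 ≤ ψ n)
    (ha : Antitone ψ) (hns : ¬ Summable (fun n => ψ n ^ d)) :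
    ¬ Summable (fun m => ψ (v * m) ^ d) := by
  have : NeZero v := ⟨hv.ne'⟩
  set F : ℕ → ℝ≥0∞ := fun n => ENNReal.ofReal (ψ n ^ d) with hF
  have hFtop : ∑' n, F n = ⊤ := by
    by_contra h
    exact hns <| by
      have := ENNReal.summable_toReal h
      convert this using 1
      funext n
      rw [hF, ENNReal.toReal_ofReal (pow_nonneg (h0 n) d)]
  intro hsum
  have hne : ∑' m, F (v * m) ≠ ⊤ := by
    have : ENNReal.ofReal (∑' m, ψ (v * m) ^ d) = ∑' m, F (v * m) :=
      ENNReal.ofReal_tsum_of_nonneg (fun m => pow_nonneg (h0 _) d) hsum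
    rw [← this]; exact ENNReal.ofReal_ne_top
  have hle : ∑' n, F n ≤ ∑' n, F (v * (n / v)) := by
    refine ENNReal.tsum_le_tsum fun n => ?_
    refine ENNReal.ofReal_le_ofReal ?_
    exact pow_le_pow_left₀ (h0 n) (ha (Nat.mul_div_le n v)) d
  have heq : ∑' n, F (v * (n / v)) = (v : ℝ≥0∞) * ∑' m, F (v * m) := by
    calc ∑' n, F (v * (n / v))
        = ∑' p : ℕ × Fin v, F (v * p.1) :=
          (Nat.divModEquiv v).tsum_eq (fun p : ℕ × Fin v => F (v * p.1))
      _ = ∑' m, ∑' _ : Fin v, F (v * m) :=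
          ENNReal.tsum_prod (f := fun a (_ : Fin v) => F (v * a))
      _ = ∑' m, (v : ℝ≥0∞) * F (v * m) := by
          congr 1; funext m
          simp [tsum_fintype, Finset.sum_const, mul_comm]
      _ = (v : ℝ≥0∞) * ∑' m, F (v * m) := ENNReal.tsum_mul_left
  rw [hFtop, heq] at hle
  have : (v : ℝ≥0∞) * ∑' m, F (v * m) ≠ ⊤ :=
    ENNReal.mul_ne_top (ENNReal.natCast_ne_top v) hne
  exact this (top_le_iff.mp hle)

theorem stmt9 {d : ℕ} (y : Fin d → ℝ) (v : ℕ) (hv : 0 < v) (x : Fin d → ℝ)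
    (hx : x ∈ PiY y) : (fun i => x i / (v : ℝ)) ∈ PiY y := by
  simp only [PiY, PiSet, Set.mem_setOf_eq, Set.mem_iInter] at hx ⊢
  intro ψ hψ
  obtain ⟨h0, ha, hs⟩ := hψ
  have hφ : (fun m => ψ (v * m)) ∈ calD d :=
    ⟨fun m => h0 _, fun a b hab => ha (Nat.mul_le_mul_left v hab),
      aux_not_summable hv h0 ha hs⟩
  have hfreq := hx _ hφ
  simp only [W, Set.mem_setOf_eq] at hfreq ⊢
  rw [frequently_atTop] at hfreq ⊢
  intro N
  obtain ⟨m, hm, hPm⟩ := hfreq N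
  refine ⟨v * m, le_trans hm (Nat.le_mul_of_pos_left m hv), ?_⟩
  have hcast : (fun i => ((v * m : ℕ) : ℝ) * (x i / (v : ℝ)) + y i)
      = fun i => (m : ℝ) * x i + y i := by
    funext i
    have hv' : (v : ℝ) ≠ 0 := Nat.cast_ne_zero.mpr hv.ne'
    push_cast
    field_simp
  rw [hcast]
  exact hPm
end

section
/- Let d = 1. Then Π^0 = ℚ: a real number x satisfies, for every non-increasing ψ : ℕ → ℝ_{≥0} with Σψ(n) = ∞, that ‖nx‖ < ψ(n) for infinitely many n ∈ ℕ, if and only if x is rational. -/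
open scoped ENNReal
open Filter

/-- Distance from `t ∈ ℝ` to the nearest integer. -/
noncomputable def nrm1 (t : ℝ) : ℝ := |t - round t|

/-- `S_ℓ(x,y) = Σ_{n≥ℓ} min_{ℓ≤m≤n} ‖mx+y‖`, valued in `[0,∞]` (case `d = 1`). -/
noncomputable def S1 (l : ℤ) (x y : ℝ) : ℝ≥0∞ :=
  ∑' n : ℕ, ⨅ m ∈ Finset.Icc l (l + n), ENNReal.ofReal (nrm1 ((m : ℝ) * x + y))

/-- The class `𝒟` of non-increasing `ψ : ℕ → ℝ≥0` with `Σ ψ(n) = ∞` (case `d = 1`). -/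
def calD1 : Set (ℕ → ℝ) := {ψ | (∀ n, 0 ≤ ψ n) ∧ Antitone ψ ∧ ¬ Summable ψ}

/-- `Π` for `d = 1`. -/
def Pi1 : Set (ℝ × ℝ) :=
  {p | ∀ ψ ∈ calD1, ∃ᶠ n : ℕ in atTop, nrm1 ((n : ℝ) * p.1 + p.2) < ψ n}

/-- The vertical fiber `Φ(x)`. -/
def Phi1 (x : ℝ) : Set ℝ := {y | (x, y) ∈ Pi1}

/-- The horizontal fiber `Π^y`. -/
def PiY1 (y : ℝ) : Set ℝ := {x | (x, y) ∈ Pi1}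

lemma nrm1_nonneg (t : ℝ) : 0 ≤ nrm1 t := abs_nonneg _

lemma nrm1_le (t : ℝ) (z : ℤ) : nrm1 t ≤ |t - z| := round_le t z

lemma nrm1_intCast (z : ℤ) : nrm1 (z : ℝ) = 0 := by
  simp [nrm1]

lemma nrm1_pos_of_irrational {x : ℝ} (hx : Irrational x) {m : ℕ} (hm : 0 < m) :
    0 < nrm1 ((m : ℝ) * x) := by
  rcases lt_or_eq_of_le (nrm1_nonneg ((m : ℝ) * x)) with h | h
  · exact h
  · exfalso
    have h0 : (m : ℝ) * x - round ((m : ℝ) * x) = 0 := by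
      have h' := h.symm
      rwa [nrm1, abs_eq_zero] at h'
    have hx' : x = ((round ((m : ℝ) * x) : ℚ) / (m : ℚ) : ℚ) := by
      have hm' : (m : ℝ) ≠ 0 := Nat.cast_ne_zero.mpr hm.ne'
      push_cast
      field_simp
      rw [mul_comm x (m:ℝ)]; linarith [h0]
    exact hx ⟨_, hx'.symm⟩

/-- Dirichlet: small `nrm1 (m x)` exist. -/
lemma nrm1_near (x : ℝ) {δ : ℝ} (hδ : 0 < δ) : ∃ m : ℕ, 0 < m ∧ nrm1 ((m : ℝ) * x) < δ := by
  obtain ⟨n, hn⟩ := exists_nat_one_div_lt hδ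
  obtain ⟨k, hk0, _, hk⟩ := Real.exists_nat_abs_mul_sub_round_le x (n := n + 1) (Nat.succ_pos n)
  refine ⟨k, hk0, lt_of_le_of_lt (hk.trans ?_) hn⟩
  have h1 : (0:ℝ) < (n:ℝ) + 1 := by positivity
  have h2 : ((n:ℝ) + 1) ≤ ((n + 1 : ℕ) : ℝ) + 1 := by push_cast; linarith
  exact one_div_le_one_div_of_le h1 h2

/-- The key determinant inequality. -/
lemma nrm1_key {x δ : ℝ} (hδ : 0 < δ) {q m : ℕ} (hq : 0 < q) (hqm : q ≤ m)
    (hqx : nrm1 ((q : ℝ) * x) = δ) (hm : nrm1 ((m : ℝ) * x) < δ) :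
    1 ≤ 2 * (m : ℝ) * δ := by
  set p : ℤ := round ((q : ℝ) * x) with hp
  set p' : ℤ := round ((m : ℝ) * x) with hp'
  set e : ℝ := (q : ℝ) * x - p with hedef
  set e' : ℝ := (m : ℝ) * x - p' with he'def
  have he : |e| = δ := hqx
  have he' : |e'| < δ := hm
  have hq0 : (0:ℝ) < q := Nat.cast_pos.mpr hq
  have hm0 : (0:ℝ) < m := lt_of_lt_of_le hq0 (Nat.cast_le.mpr hqm)
  have hqmR : (q:ℝ) ≤ m := Nat.cast_le.mpr hqm
  have hDcast : ((q * p' - m * p : ℤ) : ℝ) = (m : ℝ) * e - (q : ℝ) * e' := by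
    rw [hedef, he'def]; push_cast; ring
  have hne : (q * p' - m * p : ℤ) ≠ 0 := by
    intro h0
    rw [h0, Int.cast_zero] at hDcast
    have habs : (m : ℝ) * |e| = (q : ℝ) * |e'| := by
      have : (m : ℝ) * e = (q : ℝ) * e' := by linarith
      have h2 := congrArg abs this
      rwa [abs_mul, abs_mul, abs_of_pos hm0, abs_of_pos hq0] at h2
    nlinarith
  have h1 : (1 : ℝ) ≤ |((q * p' - m * p : ℤ) : ℝ)| := by
    rw [← Int.cast_abs]
    exact_mod_cast Int.one_le_abs hne
  have h2 : |(m : ℝ) * e - (q : ℝ) * e'| ≤ (m : ℝ) * |e| + (q : ℝ) * |e'| := by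
    calc |(m : ℝ) * e - (q : ℝ) * e'| ≤ |(m : ℝ) * e| + |(q : ℝ) * e'| := abs_sub _ _
      _ = (m : ℝ) * |e| + (q : ℝ) * |e'| := by
          rw [abs_mul, abs_mul, abs_of_pos hm0, abs_of_pos hq0]
  rw [hDcast] at h1
  nlinarith [abs_nonneg e']

/-- `ψ(n) = min_{1 ≤ m ≤ n} nrm1 (m x)` (with `ψ 0 = ψ 1`). -/
noncomputable def fmin (x : ℝ) (n : ℕ) : ℝ :=
  (Finset.Icc 1 (max 1 n)).inf'
    ⟨1, Finset.mem_Icc.mpr ⟨le_refl 1, le_max_left 1 n⟩⟩ fun m => nrm1 ((m : ℝ) * x)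

lemma fmin_le' {x : ℝ} {m n : ℕ} (h1 : 1 ≤ m) (h2 : m ≤ max 1 n) :
    fmin x n ≤ nrm1 ((m : ℝ) * x) :=
  Finset.inf'_le _ (Finset.mem_Icc.mpr ⟨h1, h2⟩)

lemma fmin_le {x : ℝ} {m n : ℕ} (h1 : 1 ≤ m) (h2 : m ≤ n) : fmin x n ≤ nrm1 ((m : ℝ) * x) :=
  fmin_le' h1 (le_trans h2 (le_max_right 1 n))

lemma le_fmin {x : ℝ} {n : ℕ} {δ : ℝ}
    (h : ∀ m : ℕ, 1 ≤ m → m ≤ max 1 n → δ ≤ nrm1 ((m : ℝ) * x)) : δ ≤ fmin x n :=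
  Finset.le_inf' _ _ fun m hm => by
    rw [Finset.mem_Icc] at hm; exact h m hm.1 hm.2

lemma fmin_nonneg (x : ℝ) (n : ℕ) : 0 ≤ fmin x n :=
  le_fmin fun m _ _ => nrm1_nonneg _

lemma fmin_antitone (x : ℝ) : Antitone (fmin x) := by
  intro a b hab
  exact le_fmin fun m h1 h2 =>
    fmin_le' h1 (le_trans h2 (max_le_max (le_refl 1) hab))

lemma fmin_pos {x : ℝ} (hx : Irrational x) (n : ℕ) : 0 < fmin x n := by
  have := Finset.lt_inf'_iff (f := fun m : ℕ => nrm1 ((m : ℝ) * x))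
    (H := (⟨1, Finset.mem_Icc.mpr ⟨le_refl 1, le_max_left 1 n⟩⟩ :
      (Finset.Icc 1 (max 1 n)).Nonempty)) (a := (0:ℝ))
  rw [fmin, this]
  intro m hm
  rw [Finset.mem_Icc] at hm
  exact nrm1_pos_of_irrational hx hm.1

/-- Frequently `fmin x j ≥ 1/(4j)`. -/
lemma fmin_freq {x : ℝ} (hx : Irrational x) (N : ℕ) (hN : 1 ≤ N) :
    ∃ j : ℕ, N ≤ j ∧ 1 ≤ 4 * (j : ℝ) * fmin x j := by
  classical
  set δ := fmin x N with hδdef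
  have hδ : 0 < δ := fmin_pos hx N
  have hex : ∃ m : ℕ, 0 < m ∧ nrm1 ((m : ℝ) * x) < δ := nrm1_near x hδ
  set m₀ := Nat.find hex with hm₀def
  obtain ⟨hm₀pos, hm₀lt⟩ := Nat.find_spec hex
  have hmin : ∀ k : ℕ, 0 < k → k < m₀ → δ ≤ nrm1 ((k : ℝ) * x) := by
    intro k hk hkm
    by_contra hcon
    exact Nat.find_min hex hkm ⟨hk, lt_of_not_ge hcon⟩
  have hNm : N < m₀ := by
    by_contra hcon
    push_neg at hcon
    have := fmin_le (x := x) (m := m₀) (n := N) hm₀pos hcon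
    rw [← hδdef] at this
    linarith
  set j := m₀ - 1 with hjdef
  have hjm : m₀ = j + 1 := by omega
  have hNj : N ≤ j := by omega
  have hj1 : 1 ≤ j := le_trans hN hNj
  refine ⟨j, hNj, ?_⟩
  -- fmin x j ≥ δ
  have hfj : δ ≤ fmin x j := by
    refine le_fmin fun k h1 h2 => hmin k h1 ?_
    have : max 1 j = j := max_eq_right hj1
    omega
  -- get q achieving fmin x N
  obtain ⟨q, hqmem, hqeq⟩ := Finset.exists_mem_eq_inf'
    (⟨1, Finset.mem_Icc.mpr ⟨le_refl 1, le_max_left 1 N⟩⟩ :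
      (Finset.Icc 1 (max 1 N)).Nonempty) (fun m : ℕ => nrm1 ((m : ℝ) * x))
  rw [Finset.mem_Icc] at hqmem
  have hqN : q ≤ N := by
    have : max 1 N = N := max_eq_right hN
    omega
  have hkey : 1 ≤ 2 * (m₀ : ℝ) * δ :=
    nrm1_key hδ hqmem.1 (le_trans hqN (le_of_lt hNm)) hqeq.symm hm₀lt
  have hcast : (m₀ : ℝ) = (j : ℝ) + 1 := by rw [hjm]; push_cast; ring
  have hjR : (1:ℝ) ≤ (j : ℝ) := by exact_mod_cast hj1
  nlinarith
                            
lemma fmin_not_summable {x : ℝ} (hx : Irrational x) : ¬ Summable (fmin x) := by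
  intro hS
  obtain ⟨s, hs⟩ := hS.vanishing (e := Set.Iio (1/8 : ℝ)) (Iio_mem_nhds (by norm_num))
  set B := s.sup id with hB
  obtain ⟨j, hjN, hjval⟩ := fmin_freq hx (2 * B + 2) (by omega)
  set t := Finset.Ioc (j / 2) j with ht
  have hdisj : Disjoint t s := by
    rw [Finset.disjoint_left]
    intro a hat has
    have h1 : a ≤ B := Finset.le_sup (f := id) has
    rw [ht, Finset.mem_Ioc] at hat
    omega
  have hlt := hs t hdisj
  rw [Set.mem_Iio] at hlt
  have hcard : t.card = j - j / 2 := by rw [ht, Nat.card_Ioc]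
  have hsum : (t.card : ℝ) * fmin x j ≤ ∑ k ∈ t, fmin x k := by
    have := Finset.card_nsmul_le_sum t (fmin x) (fmin x j) ?_
    · simpa [nsmul_eq_mul] using this
    · intro i hi
      rw [ht, Finset.mem_Ioc] at hi
      exact fmin_antitone x hi.2
  have hc2 : j ≤ 2 * t.card := by omega
  have hc2R : (j : ℝ) ≤ 2 * (t.card : ℝ) := by exact_mod_cast hc2
  have hf0 : 0 ≤ fmin x j := fmin_nonneg x j
  nlinarith

theorem stmt14 : PiY1 0 = Set.range ((↑) : ℚ → ℝ) := by
  ext x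
  simp only [PiY1, Pi1, Set.mem_setOf_eq, Set.mem_range]
  constructor
  · -- hard direction
    intro h
    by_contra hx
    have hirr : Irrational x := by
      rw [Irrational]
      intro hmem
      obtain ⟨r, hr⟩ := hmem
      exact hx ⟨r, hr⟩
    have hmem : fmin x ∈ calD1 :=
      ⟨fmin_nonneg x, fmin_antitone x, fmin_not_summable hirr⟩
    have hfreq := h (fmin x) hmem
    rw [frequently_atTop] at hfreq
    obtain ⟨n, hn1, hnlt⟩ := hfreq 1
    have : fmin x n ≤ nrm1 ((n : ℝ) * x + 0) := by
      rw [add_zero]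
      exact fmin_le hn1 (le_refl n)
    linarith
  · -- easy direction
    rintro ⟨r, rfl⟩ ψ ⟨hpos, hanti, hns⟩
    have hψpos : ∀ n, 0 < ψ n := by
      intro n
      rcases (hpos n).lt_or_eq with h | h
      · exact h
      · exfalso
        apply hns
        apply summable_of_ne_finset_zero (s := Finset.range (n + 1))
        intro b hb
        rw [Finset.mem_range, not_lt] at hb
        have h1 : ψ b ≤ ψ n := hanti (by omega)
        have h2 : 0 ≤ ψ b := hpos b
        linarith
    rw [frequently_atTop]
    intro N
    refine ⟨r.den * (N + 1), ?_, ?_⟩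
    · have : 1 ≤ r.den := r.pos
      calc N ≤ N + 1 := by omega
        _ ≤ r.den * (N + 1) := Nat.le_mul_of_pos_left _ r.pos
    · have hval : ((r.den * (N + 1) : ℕ) : ℝ) * (r : ℝ) + 0 = (((N + 1 : ℤ) * r.num : ℤ) : ℝ) := by
        have hden : ((r.den : ℝ)) * (r : ℝ) = (r.num : ℝ) := by
          rw [Rat.cast_def]
          field_simp
        push_cast
        push_cast at hden
        nlinarith [hden]
      rw [hval, nrm1_intCast]
      exact hψpos _
end

section
/- Let d = 1. If x ∈ ℚ and y ∈ Φ(x), then y ∈ ℚ. -/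
open scoped ENNReal
open Filter

lemma nrm1_add_int (t : ℝ) (m : ℤ) : nrm1 (t + m) = nrm1 t := by
  unfold nrm1
  rw [round_add_intCast]
  push_cast
  ring_nf

lemma nrm1_pos_of_irrational_s16 {t : ℝ} (h : Irrational t) : 0 < nrm1 t := by
  unfold nrm1
  exact abs_pos.mpr (sub_ne_zero.mpr (h.ne_int (round t)))

theorem stmt16 (x : ℚ) (y : ℝ) (hy : y ∈ Phi1 (x : ℝ)) :
    ∃ q : ℚ, y = (q : ℝ) := by
  by_contra h
  have hirr : Irrational y := fun ⟨q, hq⟩ => h ⟨q, hq.symm⟩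
  set q := x.den with hqdef
  have hq : 0 < q := x.pos
  set f : ℕ → ℝ := fun r => nrm1 ((r : ℝ) * (x : ℝ) + y) with hf
  have hne : (Finset.range q).Nonempty := ⟨0, Finset.mem_range.mpr hq⟩
  set ε : ℝ := (Finset.range q).inf' hne f with hε
  have hεpos : 0 < ε := by
    rw [hε, Finset.lt_inf'_iff]
    intro r _
    apply nrm1_pos_of_irrational_s16
    have : ((r : ℝ) * (x : ℝ)) = ((r * x : ℚ) : ℝ) := by push_cast; ring
    rw [this]
    exact hirr.ratCast_add _
  have hden : ((q : ℝ)) * (x : ℝ) = (x.num : ℝ) := by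
    have h0 : ((x : ℝ)) = (x.num : ℝ) / (x.den : ℝ) := by rw [Rat.cast_def]
    have hd : ((x.den : ℝ)) ≠ 0 := by positivity
    rw [hqdef, h0]
    field_simp
  have key : ∀ n : ℕ, ε ≤ nrm1 ((n : ℝ) * (x : ℝ) + y) := by
    intro n
    set k := n / q with hk
    set r := n % q with hr
    have hn : (n : ℝ) = (r : ℝ) + (k : ℝ) * (q : ℝ) := by
      exact_mod_cast (Nat.mod_add_div' n q).symm
    have h2 : ((↑(k * x.num) : ℤ) : ℝ) = (k : ℝ) * ((q : ℝ) * (x : ℝ)) := by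
      rw [hden]; push_cast; ring
    have h3 : (n : ℝ) * (x : ℝ) + y
        = ((r : ℝ) * (x : ℝ) + y) + ((↑(k * x.num) : ℤ) : ℝ) := by
      rw [hn, h2]; ring
    rw [h3, nrm1_add_int]
    exact Finset.inf'_le f (Finset.mem_range.mpr (Nat.mod_lt n hq))
  have hψ : (fun _ : ℕ => ε) ∈ calD1 := by
    refine ⟨fun _ => hεpos.le, antitone_const, ?_⟩
    rw [summable_const_iff]
    exact hεpos.ne'
  obtain ⟨n, hlt⟩ := (hy (fun _ => ε) hψ).exists
  exact absurd (key n) (not_le.mpr hlt)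
end

section
/- Let d = 1. If 1, x, y are linearly dependent over ℚ and x is irrational, then (x,y) ∉ Π, i.e., there exists a non-increasing ψ : ℕ → ℝ_{≥0} with Σ_n ψ(n) = ∞ such that ‖nx+y‖ ≥ ψ(n) for all sufficiently large n ∈ ℕ. -/
open scoped ENNReal
open Filter

section aux

lemma nrm1_le_abs_sub_int (t : ℝ) (m : ℤ) : nrm1 t ≤ |t - m| := by
  by_cases h : m = round t
  · simp [nrm1, h]
  · have h1 : |t - round t| ≤ 1 / 2 := abs_sub_round t
    have h2 : (1 : ℝ) ≤ |(m : ℝ) - round t| := by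
      have hne : (m - round t : ℤ) ≠ 0 := sub_ne_zero.mpr h
      have := Int.one_le_abs hne
      have : (1 : ℝ) ≤ |((m - round t : ℤ) : ℝ)| := by exact_mod_cast (by exact_mod_cast this)
      simpa using this
    have h3 : |(m : ℝ) - round t| ≤ |t - m| + |t - round t| := by
      calc |(m : ℝ) - round t| = |(t - round t) - (t - m)| := by ring_nf
        _ ≤ |t - round t| + |t - m| := abs_sub _ _
        _ = |t - m| + |t - round t| := by ring
    have : nrm1 t = |t - round t| := rfl
    linarith [this ▸ h1]

lemma nrm1_neg_le (t : ℝ) : nrm1 (-t) ≤ nrm1 t := by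
  have h := nrm1_le_abs_sub_int (-t) (-round t)
  calc nrm1 (-t) ≤ |(-t) - ((-round t : ℤ) : ℝ)| := h
    _ = |t - round t| := by push_cast; rw [← abs_neg]; ring_nf
    _ = nrm1 t := rfl

lemma nrm1_int_mul_le (k : ℤ) (t : ℝ) : nrm1 ((k : ℝ) * t) ≤ |(k : ℝ)| * nrm1 t := by
  have h := nrm1_le_abs_sub_int ((k : ℝ) * t) (k * round t)
  calc nrm1 ((k : ℝ) * t) ≤ |(k : ℝ) * t - ((k * round t : ℤ) : ℝ)| := h
    _ = |(k : ℝ)| * |t - round t| := by push_cast; rw [← abs_mul]; ring_nf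
    _ = |(k : ℝ)| * nrm1 t := rfl

lemma nrm1_pos {t : ℝ} (ht : Irrational t) : 0 < nrm1 t :=
  abs_pos.mpr (sub_ne_zero.mpr (ht.ne_int _))

variable {x : ℝ}

/-- `φ N = min_{1 ≤ j ≤ N+1} ‖ j x ‖`. -/
noncomputable def phiF (x : ℝ) (N : ℕ) : ℝ :=
  (Finset.Icc 1 (N + 1)).inf' ⟨1, by simp⟩ (fun j : ℕ => nrm1 ((j : ℝ) * x))

lemma phiF_le {N j : ℕ} (hj : j ∈ Finset.Icc 1 (N + 1)) :
    phiF x N ≤ nrm1 ((j : ℝ) * x) := Finset.inf'_le _ hj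

lemma phiF_pos (hx : Irrational x) (N : ℕ) : 0 < phiF x N := by
  refine (Finset.lt_inf'_iff _).mpr ?_
  intro j hj
  have hj1 : j ≠ 0 := by
    have := (Finset.mem_Icc.mp hj).1; omega
  exact nrm1_pos (hx.natCast_mul hj1)

lemma phiF_anti : Antitone (phiF x) := by
  intro M N h
  exact Finset.inf'_mono _ (Finset.Icc_subset_Icc le_rfl (by omega)) _

lemma phiF_small (hx : Irrational x) {ε : ℝ} (hε : 0 < ε) : ∃ N, phiF x N < ε := by
  obtain ⟨n, hn⟩ := exists_nat_gt (1 / ε)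
  have hn1 : 1 ≤ n := by
    by_contra h
    push_neg at h
    interval_cases n
    · simpa using lt_trans (by positivity : (0:ℝ) < 1/ε) hn
  obtain ⟨j, k, hk0, hkn, hjk⟩ := Real.exists_int_int_abs_mul_sub_le x (by omega : 0 < n)
  refine ⟨n - 1, ?_⟩
  have hkmem : k.toNat ∈ Finset.Icc 1 (n - 1 + 1) := by
    rw [Finset.mem_Icc]
    constructor
    · omega
    · omega
  have hcast : ((k.toNat : ℕ) : ℝ) = (k : ℝ) := by
    exact_mod_cast congrArg (Int.cast : ℤ → ℝ) (Int.toNat_of_nonneg hk0.le)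
  calc phiF x (n - 1) ≤ nrm1 ((k.toNat : ℝ) * x) := phiF_le hkmem
    _ ≤ |(k : ℝ) * x - j| := by rw [hcast]; exact nrm1_le_abs_sub_int _ _
    _ ≤ 1 / ((n : ℝ) + 1) := hjk
    _ < ε := by
        rw [div_lt_iff₀ (by positivity)]
        rw [div_lt_iff₀ hε] at hn
        nlinarith

/-- The key arithmetic inequality for best approximations. -/
lemma key_ineq (hx : Irrational x) {q q' : ℕ} (hq : 1 ≤ q) (hqq' : q ≤ q')
    (h : nrm1 ((q' : ℝ) * x) < nrm1 ((q : ℝ) * x)) :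
    1 ≤ (q' : ℝ) * nrm1 ((q : ℝ) * x) + (q : ℝ) * nrm1 ((q' : ℝ) * x) := by
  set p : ℤ := round ((q : ℝ) * x) with hp
  set p' : ℤ := round ((q' : ℝ) * x) with hp'
  have hqpos : (0 : ℝ) < q := by exact_mod_cast hq
  have hne : p * (q' : ℤ) - p' * (q : ℤ) ≠ 0 := by
    intro he
    have he' : (p : ℝ) * q' = (p' : ℝ) * q := by
      have : ((p * (q' : ℤ) : ℤ) : ℝ) = ((p' * (q : ℤ) : ℤ) : ℝ) := by
        exact_mod_cast congrArg (Int.cast : ℤ → ℝ) (sub_eq_zero.mp he)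
      push_cast at this
      linarith
    have hid : (q : ℝ) * ((q' : ℝ) * x - p') = (q' : ℝ) * ((q : ℝ) * x - p) := by
      nlinarith [he']
    have habs : (q : ℝ) * nrm1 ((q' : ℝ) * x) = (q' : ℝ) * nrm1 ((q : ℝ) * x) := by
      have := congrArg abs hid
      rwa [abs_mul, abs_mul, abs_of_pos hqpos,
        abs_of_pos (by exact_mod_cast (hq.trans hqq') : (0:ℝ) < q')] at this
    have h1 : (q : ℝ) * nrm1 ((q' : ℝ) * x) < (q : ℝ) * nrm1 ((q : ℝ) * x) := by
      exact mul_lt_mul_of_pos_left h hqpos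
    have h2 : (q : ℝ) * nrm1 ((q : ℝ) * x) ≤ (q' : ℝ) * nrm1 ((q : ℝ) * x) := by
      apply mul_le_mul_of_nonneg_right _ (nrm1_nonneg _)
      exact_mod_cast hqq'
    linarith
  have h1 : (1 : ℝ) ≤ |((p * (q' : ℤ) - p' * (q : ℤ) : ℤ) : ℝ)| := by
    have := Int.one_le_abs hne
    exact_mod_cast this
  have h2 : ((p * (q' : ℤ) - p' * (q : ℤ) : ℤ) : ℝ)
      = (q' : ℝ) * ((p : ℝ) - (q : ℝ) * x) + (q : ℝ) * ((q' : ℝ) * x - (p' : ℝ)) := by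
    push_cast
    ring
  calc (1 : ℝ) ≤ |((p * (q' : ℤ) - p' * (q : ℤ) : ℤ) : ℝ)| := h1
    _ = |(q' : ℝ) * ((p : ℝ) - (q : ℝ) * x) + (q : ℝ) * ((q' : ℝ) * x - (p' : ℝ))| := by
        rw [h2]
    _ ≤ |(q' : ℝ) * ((p : ℝ) - (q : ℝ) * x)| + |(q : ℝ) * ((q' : ℝ) * x - (p' : ℝ))| :=
        abs_add_le _ _
    _ = (q' : ℝ) * nrm1 ((q : ℝ) * x) + (q : ℝ) * nrm1 ((q' : ℝ) * x) := by
        rw [abs_mul, abs_mul, abs_of_pos hqpos,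
          abs_of_pos (by exact_mod_cast (hq.trans hqq') : (0:ℝ) < q'),
          abs_sub_comm]
        rfl

lemma not_summable_phiF (hx : Irrational x) : ¬ Summable (phiF x) := by
  intro hS
  have hex : ∀ M : ℕ, ∃ N, phiF x N < phiF x M := fun M =>
    phiF_small hx (phiF_pos hx M)
  classical
  set nxt : ℕ → ℕ := fun M => Nat.find (hex M) with hnxt
  have h1 : ∀ M, phiF x (nxt M) < phiF x M := fun M => Nat.find_spec (hex M)
  have h2 : ∀ M N, N < nxt M → phiF x M ≤ phiF x N := fun M N hN =>
    le_of_not_gt (Nat.find_min (hex M) hN)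
  have h3 : ∀ M, M < nxt M := by
    intro M
    by_contra h
    push_neg at h
    exact absurd (phiF_anti h) (not_le.mpr (h1 M))
  -- key lower bound for the value on a block
  have hbd : ∀ M : ℕ, 1 ≤ 2 * ((nxt M : ℝ) + 1) * phiF x M := by
    intro M
    obtain ⟨q, hqmem, hqeq⟩ := Finset.exists_mem_eq_inf' (⟨1, by simp⟩ :
      (Finset.Icc 1 (M + 1)).Nonempty) (fun j : ℕ => nrm1 ((j : ℝ) * x))
    obtain ⟨q', hq'mem, hq'eq⟩ := Finset.exists_mem_eq_inf' (⟨1, by simp⟩ :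
      (Finset.Icc 1 (nxt M + 1)).Nonempty) (fun j : ℕ => nrm1 ((j : ℝ) * x))
    rw [Finset.mem_Icc] at hqmem hq'mem
    have hqeq' : phiF x M = nrm1 ((q : ℝ) * x) := hqeq
    have hq'eq' : phiF x (nxt M) = nrm1 ((q' : ℝ) * x) := hq'eq
    have hq'big : M + 1 < q' := by
      by_contra h
      push_neg at h
      have : phiF x M ≤ nrm1 ((q' : ℝ) * x) :=
        phiF_le (Finset.mem_Icc.mpr ⟨hq'mem.1, h⟩)
      rw [← hq'eq'] at this
      exact absurd this (not_le.mpr (h1 M))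
    have hqq' : q ≤ q' := by omega
    have hlt : nrm1 ((q' : ℝ) * x) < nrm1 ((q : ℝ) * x) := by
      rw [← hqeq', ← hq'eq']; exact h1 M
    have hkey := key_ineq hx hqmem.1 hqq' hlt
    rw [← hqeq', ← hq'eq'] at hkey
    have e1 : (q' : ℝ) ≤ (nxt M : ℝ) + 1 := by exact_mod_cast hq'mem.2
    have e2 : (q : ℝ) ≤ (nxt M : ℝ) + 1 := by
      have : q ≤ nxt M + 1 := by omega
      exact_mod_cast this
    have e3 : phiF x (nxt M) ≤ phiF x M := (h1 M).le
    nlinarith [phiF_pos hx M, phiF_pos hx (nxt M), (by positivity : (0:ℝ) ≤ (q:ℝ))]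
  -- the record sequence
  set Ms : ℕ → ℕ := fun k => Nat.rec 0 (fun _ m => nxt m) k with hMs
  have hMs0 : Ms 0 = 0 := rfl
  have hMsS : ∀ k, Ms (k + 1) = nxt (Ms k) := fun k => rfl
  have hMmono : StrictMono Ms := strictMono_nat_of_lt_succ fun k => by
    rw [hMsS]; exact h3 _
  set t : ℕ → ℝ := fun k => ((Ms (k + 1) : ℝ) - (Ms k : ℝ)) / ((Ms (k + 1) : ℝ) + 1)
    with ht
  have htnonneg : ∀ k, 0 ≤ t k := by
    intro k
    apply div_nonneg _ (by positivity)
    have := (hMmono (Nat.lt_succ_self k)).le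
    have : (Ms k : ℝ) ≤ (Ms (k + 1) : ℝ) := by exact_mod_cast this
    linarith
  set C : ℝ := ∑' n, phiF x n with hC
  -- partial sums of t are bounded by 2C
  have hblock : ∀ K : ℕ, ∑ k ∈ Finset.range K, t k ≤ 2 * ∑ N ∈ Finset.range (Ms K), phiF x N := by
    intro K
    induction K with
    | zero => simp [hMs0]
    | succ K ih =>
      rw [Finset.sum_range_succ]
      have hsplit : ∑ N ∈ Finset.range (Ms (K + 1)), phiF x N
          = ∑ N ∈ Finset.range (Ms K), phiF x N
            + ∑ N ∈ Finset.Ico (Ms K) (Ms (K + 1)), phiF x N := by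
        simp only [Finset.range_eq_Ico]
        exact (Finset.sum_Ico_consecutive _ (Nat.zero_le _)
          (hMmono (Nat.lt_succ_self K)).le).symm
      have hblk : t K ≤ 2 * ∑ N ∈ Finset.Ico (Ms K) (Ms (K + 1)), phiF x N := by
        have hlow : ∀ N ∈ Finset.Ico (Ms K) (Ms (K + 1)), phiF x (Ms K) ≤ phiF x N := by
          intro N hN
          rw [Finset.mem_Ico] at hN
          exact h2 (Ms K) N (by rw [← hMsS]; exact hN.2)
        have hcard : (Finset.Ico (Ms K) (Ms (K + 1))).card = Ms (K + 1) - Ms K :=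
          Nat.card_Ico _ _
        have hsum : ((Ms (K + 1) - Ms K : ℕ) : ℝ) * phiF x (Ms K)
            ≤ ∑ N ∈ Finset.Ico (Ms K) (Ms (K + 1)), phiF x N := by
          have := Finset.card_nsmul_le_sum (Finset.Ico (Ms K) (Ms (K + 1)))
            (fun N => phiF x N) (phiF x (Ms K)) hlow
          rwa [hcard, nsmul_eq_mul] at this
        have hb := hbd (Ms K)
        rw [← hMsS K] at hb
        have hd : t K ≤ 2 * (((Ms (K + 1) - Ms K : ℕ) : ℝ) * phiF x (Ms K)) := by
          have hcast : ((Ms (K + 1) - Ms K : ℕ) : ℝ) = (Ms (K + 1) : ℝ) - (Ms K : ℝ) := by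
            have := (hMmono (Nat.lt_succ_self K)).le
            push_cast [Nat.cast_sub this]
            ring
          rw [hcast, ht]
          rw [div_le_iff₀ (by positivity)]
          have hnn : (0 : ℝ) ≤ (Ms (K + 1) : ℝ) - (Ms K : ℝ) := by
            have := (hMmono (Nat.lt_succ_self K)).le
            have : (Ms K : ℝ) ≤ (Ms (K + 1) : ℝ) := by exact_mod_cast this
            linarith
          nlinarith
        linarith
      linarith
  have hpartial : ∀ K : ℕ, ∑ k ∈ Finset.range K, t k ≤ 2 * C := by
    intro K
    refine (hblock K).trans ?_
    have : ∑ N ∈ Finset.range (Ms K), phiF x N ≤ C :=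
      Summable.sum_le_tsum _ (fun n _ => (phiF_pos hx n).le) hS
    linarith
  have htsum : Summable t := summable_of_sum_range_le htnonneg hpartial
  have htzero : Tendsto t atTop (nhds 0) := htsum.tendsto_atTop_zero
  obtain ⟨K₀, hK₀⟩ := (Metric.tendsto_atTop.mp htzero (1/2) (by norm_num))
  have hhalf : ∀ k, K₀ ≤ k → t k < 1/2 := by
    intro k hk
    have := hK₀ k hk
    rw [Real.dist_eq, sub_zero, abs_of_nonneg (htnonneg k)] at this
    exact this
  -- log bound
  have hlog : ∀ k, K₀ ≤ k →
      Real.log ((Ms (k + 1) : ℝ) + 1) - Real.log ((Ms k : ℝ) + 1) ≤ 2 * t k := by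
    intro k hk
    set a : ℝ := (Ms (k + 1) : ℝ) + 1 with ha
    set b : ℝ := (Ms k : ℝ) + 1 with hb
    have hapos : 0 < a := by positivity
    have hbpos : 0 < b := by positivity
    have hba : b ≤ a := by
      have := (hMmono (Nat.lt_succ_self k)).le
      have : (Ms k : ℝ) ≤ (Ms (k + 1) : ℝ) := by exact_mod_cast this
      simp only [ha, hb]; linarith
    have htk : t k = (a - b) / a := by rw [ht, ha, hb]; ring_nf
    have hlt : a < 2 * b := by
      have := hhalf k hk
      rw [htk, div_lt_iff₀ hapos] at this
      linarith
    have hlog1 : Real.log (a / b) ≤ a / b - 1 := Real.log_le_sub_one_of_pos (by positivity)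
    have hlog2 : Real.log (a / b) = Real.log a - Real.log b :=
      Real.log_div hapos.ne' hbpos.ne'
    have h4 : a / b - 1 = (a - b) / b := by field_simp
    have h5 : (a - b) / b ≤ 2 * ((a - b) / a) := by
      rw [mul_div_assoc', div_le_div_iff₀ hbpos hapos]
      nlinarith
    rw [← hlog2, htk]
    linarith
  -- telescoping log: log(Ms K + 1) bounded
  have hlogbound : ∀ K, K₀ ≤ K →
      Real.log ((Ms K : ℝ) + 1) ≤ Real.log ((Ms K₀ : ℝ) + 1) + 2 * (2 * C) := by
    intro K hK
    have htel : ∀ K, K₀ ≤ K → Real.log ((Ms K : ℝ) + 1) ≤ Real.log ((Ms K₀ : ℝ) + 1)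
        + 2 * ∑ k ∈ Finset.Ico K₀ K, t k := by
      intro K hK
      induction K, hK using Nat.le_induction with
      | base => simp
      | succ K hK ih =>
        rw [Finset.sum_Ico_succ_top hK]
        have := hlog K hK
        linarith
    refine (htel K hK).trans ?_
    have hico : ∑ k ∈ Finset.Ico K₀ K, t k ≤ ∑ k ∈ Finset.range K, t k := by
      rw [Finset.range_eq_Ico]
      exact Finset.sum_le_sum_of_subset_of_nonneg
        (Finset.Ico_subset_Ico (Nat.zero_le _) le_rfl) (fun i _ _ => htnonneg i)
    have := hpartial K
    linarith
  -- contradiction: log (Ms K + 1) → ∞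
  set B : ℝ := Real.log ((Ms K₀ : ℝ) + 1) + 2 * (2 * C) with hB
  set K : ℕ := K₀ + ⌈Real.exp B⌉₊ with hKdef
  have hKge : K₀ ≤ K := Nat.le_add_right _ _
  have hMK : (K : ℝ) ≤ (Ms K : ℝ) := by exact_mod_cast hMmono.le_apply
  have hexp : Real.exp B < (Ms K : ℝ) + 1 := by
    have h1 : Real.exp B ≤ (⌈Real.exp B⌉₊ : ℝ) := Nat.le_ceil _
    have h2 : ((⌈Real.exp B⌉₊ : ℕ) : ℝ) ≤ (K : ℝ) := by
      have : (⌈Real.exp B⌉₊ : ℕ) ≤ K := by omega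
      exact_mod_cast this
    linarith
  have : B < Real.log ((Ms K : ℝ) + 1) :=
    (Real.lt_log_iff_exp_lt (by positivity)).mpr hexp
  exact absurd (hlogbound K hKge) (not_le.mpr this)

/-- Summability transfer along affine reparametrisation. -/
lemma summable_of_summable_affine {φ : ℕ → ℝ} (h0 : ∀ n, 0 ≤ φ n) (ha : Antitone φ)
    {A B : ℕ} (hA : 1 ≤ A) (hS : Summable fun n => φ (A * n + B)) : Summable φ := by
  set C : ℝ := ∑' n, φ (A * n + B) with hC
  have hCnn : ∀ n, 0 ≤ φ (A * n + B) := fun n => h0 _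
  have hkey : ∀ m : ℕ, ∑ N ∈ Finset.range (A * m), φ (N + B)
      ≤ (A : ℝ) * ∑ n ∈ Finset.range m, φ (A * n + B) := by
    intro m
    induction m with
    | zero => simp
    | succ m ih =>
      have hsplit : ∑ N ∈ Finset.range (A * (m + 1)), φ (N + B)
          = ∑ N ∈ Finset.range (A * m), φ (N + B)
            + ∑ N ∈ Finset.Ico (A * m) (A * (m + 1)), φ (N + B) := by
        simp only [Finset.range_eq_Ico]
        exact (Finset.sum_Ico_consecutive _ (Nat.zero_le _)
          (Nat.mul_le_mul (le_refl A) (Nat.le_succ m))).symm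
      have hblk : ∑ N ∈ Finset.Ico (A * m) (A * (m + 1)), φ (N + B)
          ≤ (A : ℝ) * φ (A * m + B) := by
        have hle : ∀ N ∈ Finset.Ico (A * m) (A * (m + 1)), φ (N + B) ≤ φ (A * m + B) := by
          intro N hN
          rw [Finset.mem_Ico] at hN
          exact ha (by omega)
        have hcard : (Finset.Ico (A * m) (A * (m + 1))).card = A := by
          rw [Nat.card_Ico, Nat.mul_succ]; omega
        have := Finset.sum_le_card_nsmul (Finset.Ico (A * m) (A * (m + 1)))
          (fun N => φ (N + B)) (φ (A * m + B)) hle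
        rwa [hcard, nsmul_eq_mul] at this
      rw [hsplit, Finset.sum_range_succ]
      linarith
  have hbound : ∀ m : ℕ, ∑ N ∈ Finset.range m, φ (N + B) ≤ (A : ℝ) * C := by
    intro m
    have h1 : ∑ N ∈ Finset.range m, φ (N + B) ≤ ∑ N ∈ Finset.range (A * m), φ (N + B) := by
      apply Finset.sum_le_sum_of_subset_of_nonneg
      · exact Finset.range_subset_range.mpr (Nat.le_mul_of_pos_left m (by omega))
      · intro i _ _; exact h0 _
    have h2 : ∑ n ∈ Finset.range m, φ (A * n + B) ≤ C :=
      Summable.sum_le_tsum _ (fun n _ => h0 _) hS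
    have h3 := hkey m
    have hApos : (0 : ℝ) ≤ (A : ℝ) := by positivity
    nlinarith
  have hsum1 : Summable fun N => φ (N + B) :=
    summable_of_sum_range_le (fun n => h0 _) hbound
  exact (summable_nat_add_iff B).mp hsum1

end aux

theorem stmt18 (x y : ℝ) (hx : Irrational x) (k₁ k₂ k₃ : ℤ)
    (hk : ¬ (k₁ = 0 ∧ k₂ = 0 ∧ k₃ = 0))
    (hdep : (k₁ : ℝ) * x + (k₂ : ℝ) * y + (k₃ : ℝ) = 0) :
    ∃ ψ ∈ calD1, ∀ᶠ n : ℕ in atTop, ψ n ≤ nrm1 ((n : ℝ) * x + y) := by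
  have hk₂ : k₂ ≠ 0 := by
    intro h2
    subst h2
    have hk₁ : k₁ = 0 := by
      by_contra h1
      have hirr : Irrational ((k₁ : ℝ) * x) := hx.intCast_mul h1
      have : (k₁ : ℝ) * x = ((-k₃ : ℤ) : ℝ) := by push_cast at hdep ⊢; linarith
      exact hirr.ne_int (-k₃) this
    subst hk₁
    have : (k₃ : ℝ) = 0 := by simpa using hdep
    have : k₃ = 0 := by exact_mod_cast this
    exact hk ⟨rfl, rfl, this⟩
  set A : ℕ := k₂.natAbs with hA
  set B : ℕ := k₁.natAbs with hB
  have hA1 : 1 ≤ A := Int.natAbs_pos.mpr hk₂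
  refine ⟨fun n => phiF x (A * n + B) / A, ⟨?_, ?_, ?_⟩, ?_⟩
  · intro n
    exact div_nonneg (phiF_pos hx _).le (by positivity)
  · intro n m h
    have hle : phiF x (A * m + B) ≤ phiF x (A * n + B) :=
      phiF_anti (Nat.add_le_add_right (Nat.mul_le_mul_left A h) B)
    have hApos : (0 : ℝ) < (A : ℝ) := by exact_mod_cast hA1
    exact (div_le_div_iff_of_pos_right hApos).mpr hle
  · intro hsum
    have hApos : (0 : ℝ) < (A : ℝ) := by exact_mod_cast hA1
    have : Summable fun n => phiF x (A * n + B) := by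
      have := hsum.mul_right (A : ℝ)
      refine this.congr fun n => ?_
      field_simp
    exact not_summable_phiF hx
      (summable_of_summable_affine (fun n => (phiF_pos hx n).le) phiF_anti hA1 this)
  · rw [eventually_atTop]
    refine ⟨B + 1, fun n hn => ?_⟩
    set z : ℤ := k₂ * (n : ℤ) - k₁ with hz
    set j : ℕ := z.natAbs with hj
    have hApos : (0 : ℝ) < (A : ℝ) := by exact_mod_cast hA1
    have hzne : z ≠ 0 := by
      intro h0
      have : k₂ * (n : ℤ) = k₁ := by omega
      have h1 : (k₂ * (n : ℤ)).natAbs = B := by rw [this]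
      have h2 : (k₂ * (n : ℤ)).natAbs = A * n := by
        rw [Int.natAbs_mul]; simp [hA]
      have h3 : n ≤ A * n := Nat.le_mul_of_pos_left n (by omega)
      omega
    have hj1 : 1 ≤ j := Int.natAbs_pos.mpr hzne
    have hj2 : j ≤ A * n + B := by
      have h1 : z.natAbs ≤ (k₂ * (n : ℤ)).natAbs + k₁.natAbs := Int.natAbs_sub_le _ _
      have h2 : (k₂ * (n : ℤ)).natAbs = A * n := by
        rw [Int.natAbs_mul]; simp [hA]
      omega
    -- main chain
    have e1 : (k₂ : ℝ) * ((n : ℝ) * x + y) = (z : ℝ) * x + ((-k₃ : ℤ) : ℝ) := by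
      push_cast [hz]
      linear_combination hdep
    have e2 : nrm1 ((z : ℝ) * x) = nrm1 ((k₂ : ℝ) * ((n : ℝ) * x + y)) := by
      rw [e1, nrm1_add_int]
    have e3 : nrm1 ((j : ℝ) * x) ≤ nrm1 ((z : ℝ) * x) := by
      have hjabs : (j : ℝ) = |(z : ℝ)| := by rw [hj, Nat.cast_natAbs, Int.cast_abs]
      rcases abs_cases ((z : ℝ)) with ⟨he, _⟩ | ⟨he, _⟩
      · rw [hjabs, he]
      · rw [hjabs, he, neg_mul]
        exact nrm1_neg_le _
    have e4 : phiF x (A * n + B) ≤ nrm1 ((j : ℝ) * x) :=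
      phiF_le (Finset.mem_Icc.mpr ⟨hj1, by omega⟩)
    have e5 : nrm1 ((k₂ : ℝ) * ((n : ℝ) * x + y)) ≤ (A : ℝ) * nrm1 ((n : ℝ) * x + y) := by
      have := nrm1_int_mul_le k₂ ((n : ℝ) * x + y)
      have habs : |(k₂ : ℝ)| = (A : ℝ) := by
        rw [hA, Nat.cast_natAbs, Int.cast_abs]
      rwa [habs] at this
    rw [div_le_iff₀ hApos]
    calc phiF x (A * n + B) ≤ nrm1 ((j : ℝ) * x) := e4
      _ ≤ nrm1 ((z : ℝ) * x) := e3
      _ = nrm1 ((k₂ : ℝ) * ((n : ℝ) * x + y)) := e2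
      _ ≤ (A : ℝ) * nrm1 ((n : ℝ) * x + y) := e5
      _ = nrm1 ((n : ℝ) * x + y) * (A : ℝ) := by ring
end
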